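/- The sequence of critical rates is strictly decreasing: a_2 > a_3 > a_4 > ..., where a_n is the unique positive solution of 1 = x·Σ_{k=1}^n 1/(1+kx). -/

import Mathlib

theorem critical_rates_strictly_decreasing (n : ℕ) (hn : 2 ≤ n) (a b : ℝ)
    (ha : 0 < a) (hacrit : a * ∑ k ∈ Finset.Icc 1 n, 1 / (1 + k * a) = 1)
    (hb : 0 < b) (hbcrit : b * ∑ k ∈ Finset.Icc 1 (n + 1), 1 / (1 + k * b) = 1) :
    b < a := by
  by_contra h
  push_neg at h
  have key : ∀ k ∈ Finset.Icc 1 n,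
      a * (1 / (1 + (k : ℝ) * a)) ≤ b * (1 / (1 + (k : ℝ) * b)) := by
    intro k hk
    have hk1 : (1 : ℝ) ≤ (k : ℝ) := by exact_mod_cast (Finset.mem_Icc.mp hk).1
    have hka : 0 < 1 + (k : ℝ) * a := by nlinarith
    have hkb : 0 < 1 + (k : ℝ) * b := by nlinarith
    rw [mul_one_div, mul_one_div, div_le_div_iff₀ hka hkb]
    nlinarith
  have hsum : a * ∑ k ∈ Finset.Icc 1 n, 1 / (1 + (k : ℝ) * a)
      ≤ b * ∑ k ∈ Finset.Icc 1 n, 1 / (1 + (k : ℝ) * b) := by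
    rw [Finset.mul_sum, Finset.mul_sum]
    exact Finset.sum_le_sum key
  have hsplit : ∑ k ∈ Finset.Icc 1 (n + 1), 1 / (1 + (k : ℝ) * b)
      = (∑ k ∈ Finset.Icc 1 n, 1 / (1 + (k : ℝ) * b)) + 1 / (1 + ((n : ℝ) + 1) * b) := by
    rw [Finset.sum_Icc_succ_top (by omega : 1 ≤ n + 1)]
    push_cast
    ring
  have hpos : 0 < b * (1 / (1 + ((n : ℝ) + 1) * b)) := by positivity
  rw [hsplit, mul_add] at hbcrit
  nlinarith
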